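/- Let ε > 0 and let β be a sub-Gaussian probability measure on ℝ^d. Then the map α ↦ OT_ε(α, β) is convex on the set of sub-Gaussian probability measures on ℝ^d: for all sub-Gaussian probability measures α₀, α₁ and all λ ∈ [0,1], OT_ε(λα₀ + (1−λ)α₁, β) ≤ λ OT_ε(α₀, β) + (1−λ) OT_ε(α₁, β). -/

import Mathlib

open MeasureTheory ProbabilityTheory
open scoped ENNReal Classical

/-- Kullback–Leibler divergence `KL(π ‖ ρ)`, valued in `EReal`:
`∫ log (dπ/dρ) dπ` when `π ≪ ρ` and the log-likelihood ratio is `π`-integrable,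
and `⊤` otherwise. -/
noncomputable def KLdiv {X : Type*} [MeasurableSpace X] (π ρ : Measure X) : EReal :=
  if π ≪ ρ ∧ Integrable (fun x => Real.log (π.rnDeriv ρ x).toReal) π
  then ((∫ x, Real.log (π.rnDeriv ρ x).toReal ∂π : ℝ) : EReal)
  else ⊤

/-- Entropic optimal transport cost on `ℝ^d` with quadratic cost and product reference
measure: `OT_ε(α, β) = inf { ∫ ‖x-y‖² dπ + ε KL(π ‖ α ⊗ β) }` over couplings `π`
of `α` and `β`. -/
noncomputable def OTe (d : ℕ) (ε : ℝ)
    (α β : Measure (EuclideanSpace ℝ (Fin d))) : EReal :=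
  ⨅ (π : Measure (EuclideanSpace ℝ (Fin d) × EuclideanSpace ℝ (Fin d)))
    (_ : IsProbabilityMeasure π) (_ : π.fst = α) (_ : π.snd = β),
    (((∫⁻ p, ENNReal.ofReal (‖p.1 - p.2‖ ^ 2) ∂π : ℝ≥0∞) : EReal)
      + (ε : EReal) * KLdiv π (α.prod β))

/-- A probability measure on `ℝ^d` is sub-Gaussian if `∫ exp (‖x‖²/q) dα < ∞`
for some `q > 0`. -/
def SubGaussian (d : ℕ) (α : Measure (EuclideanSpace ℝ (Fin d))) : Prop :=
  ∃ q : ℝ, 0 < q ∧ ∫⁻ x, ENNReal.ofReal (Real.exp (‖x‖ ^ 2 / q)) ∂α < ⊤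

lemma gibbs_aux {X : Type*} [MeasurableSpace X] {μ ν : Measure X}
    [IsProbabilityMeasure μ] [IsProbabilityMeasure ν] (hμν : μ ≪ ν)
    (hint : Integrable (fun x => Real.log (μ.rnDeriv ν x).toReal) μ) :
    0 ≤ ∫ x, Real.log (μ.rnDeriv ν x).toReal ∂μ := by
  set g : X → ℝ := fun x => (μ.rnDeriv ν x).toReal with hg
  have hgm : Measurable g := (Measure.measurable_rnDeriv μ ν).ennreal_toReal
  have hg0 : ∀ x, 0 ≤ g x := fun x => ENNReal.toReal_nonneg
  -- key lintegral bound
  have claim : ∫⁻ x, ENNReal.ofReal ((g x)⁻¹) ∂μ ≤ 1 := by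
    have hm : AEMeasurable (fun x => ENNReal.ofReal ((g x)⁻¹)) ν :=
      (hgm.inv.ennreal_ofReal).aemeasurable
    rw [← lintegral_rnDeriv_mul hμν hm]
    calc ∫⁻ x, μ.rnDeriv ν x * ENNReal.ofReal ((g x)⁻¹) ∂ν
        ≤ ∫⁻ _, 1 ∂ν := by
          refine lintegral_mono_ae ?_
          filter_upwards [Measure.rnDeriv_lt_top μ ν] with x hx
          by_cases h0 : μ.rnDeriv ν x = 0
          · simp [hg, h0]
          · have hpos : 0 < g x := ENNReal.toReal_pos h0 hx.ne
            rw [ENNReal.ofReal_inv_of_pos hpos, ENNReal.ofReal_toReal hx.ne,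
              ENNReal.mul_inv_cancel h0 hx.ne]
      _ = 1 := by simp
  have hinv_int : Integrable (fun x => (g x)⁻¹) μ := by
    refine ⟨hgm.inv.aestronglyMeasurable, ?_⟩
    rw [hasFiniteIntegral_iff_norm]
    have : ∀ x, ENNReal.ofReal ‖(g x)⁻¹‖ = ENNReal.ofReal ((g x)⁻¹) := by
      intro x; rw [Real.norm_of_nonneg (inv_nonneg.mpr (hg0 x))]
    simp_rw [this]
    exact lt_of_le_of_lt claim ENNReal.one_lt_top
  have hb : ∀ᵐ x ∂μ, 1 - (g x)⁻¹ ≤ Real.log (g x) := by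
    filter_upwards [Measure.rnDeriv_pos hμν, hμν.ae_le (Measure.rnDeriv_lt_top μ ν)]
      with x hx0 hxt
    have hpos : 0 < g x := ENNReal.toReal_pos hx0.ne' hxt.ne
    have hlog := Real.log_le_sub_one_of_pos (inv_pos.mpr hpos)
    rw [Real.log_inv] at hlog
    linarith
  have hmono : ∫ x, (1 - (g x)⁻¹) ∂μ ≤ ∫ x, Real.log (g x) ∂μ :=
    integral_mono_ae ((integrable_const (1:ℝ)).sub hinv_int) hint hb
  have hsub : ∫ x, (1 - (g x)⁻¹) ∂μ = 1 - ∫ x, (g x)⁻¹ ∂μ := by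
    rw [integral_sub (integrable_const (1:ℝ)) hinv_int]
    simp
  have hle1 : ∫ x, (g x)⁻¹ ∂μ ≤ 1 := by
    rw [integral_eq_lintegral_of_nonneg_ae (Filter.Eventually.of_forall fun x => inv_nonneg.mpr (hg0 x))
      hgm.inv.aestronglyMeasurable]
    calc (∫⁻ x, ENNReal.ofReal ((g x)⁻¹) ∂μ).toReal ≤ (1 : ℝ≥0∞).toReal :=
          ENNReal.toReal_mono ENNReal.one_ne_top claim
      _ = 1 := by simp
  rw [hsub] at hmono
  linarith


lemma KLdiv_ne_bot {X : Type*} [MeasurableSpace X] (π ρ : Measure X) : KLdiv π ρ ≠ ⊥ := by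
  unfold KLdiv; split <;> simp

lemma KLdiv_nonneg {X : Type*} [MeasurableSpace X] (π ρ : Measure X)
    [IsProbabilityMeasure π] [IsProbabilityMeasure ρ] : 0 ≤ KLdiv π ρ := by
  unfold KLdiv
  split
  · next h => exact_mod_cast gibbs_aux h.1 h.2
  · exact le_top

lemma value_nonneg {X : Type*} [MeasurableSpace X] (π ρ : Measure X)
    [IsProbabilityMeasure π] [IsProbabilityMeasure ρ] {ε : ℝ} (hε : 0 ≤ ε) (I : ℝ≥0∞) :
    0 ≤ (I : EReal) + (ε : EReal) * KLdiv π ρ := by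
  have h1 : (0:EReal) ≤ (I : EReal) := EReal.coe_ennreal_nonneg I
  have h2 : (0:EReal) ≤ (ε : EReal) * KLdiv π ρ := by
    have := mul_le_mul_of_nonneg_left (KLdiv_nonneg π ρ) (by exact_mod_cast hε : (0:EReal) ≤ (ε:EReal))
    simpa using this
  calc (0:EReal) = 0 + 0 := by simp
    _ ≤ (I : EReal) + (ε : EReal) * KLdiv π ρ := add_le_add h1 h2

lemma smul_prod_meas {X Y : Type*} [MeasurableSpace X] [MeasurableSpace Y]
    (μ : Measure X) [IsFiniteMeasure μ] (ν : Measure Y) [IsFiniteMeasure ν]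
    (c : ℝ≥0∞) (hc : c ≠ ⊤) : (c • μ).prod ν = c • (μ.prod ν) := by
  haveI : IsFiniteMeasure (c • μ) := by
    constructor
    simp only [Measure.smul_apply, smul_eq_mul]
    exact ENNReal.mul_lt_top hc.lt_top (measure_lt_top μ _)
  refine (Measure.prod_eq (μ := c • μ) (ν := ν) (μν := c • μ.prod ν) fun s t hs ht => ?_)
  simp only [Measure.smul_apply, smul_eq_mul, Measure.prod_prod]
  ring

lemma mul_log_ge_neg_one (t : ℝ) (ht : 0 ≤ t) : -1 ≤ t * Real.log t := by
  rcases eq_or_lt_of_le ht with h | h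
  · simp [← h]
  · have hlog := Real.log_le_sub_one_of_pos (inv_pos.mpr h)
    rw [Real.log_inv] at hlog
    have : -Real.log t ≤ t⁻¹ - 1 := hlog
    nlinarith [mul_pos h (inv_pos.mpr h), mul_inv_cancel₀ (ne_of_gt h)]


lemma KLdiv_convex {X : Type*} [MeasurableSpace X] (π₀ π₁ ρ₀ ρ₁ : Measure X)
    [IsProbabilityMeasure π₀] [IsProbabilityMeasure π₁]
    [IsProbabilityMeasure ρ₀] [IsProbabilityMeasure ρ₁]
    {l : ℝ} (hl0 : 0 < l) (hl1 : l < 1)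
    (h₀ : π₀ ≪ ρ₀) (h₁ : π₁ ≪ ρ₁)
    (i₀ : Integrable (fun x => Real.log (π₀.rnDeriv ρ₀ x).toReal) π₀)
    (i₁ : Integrable (fun x => Real.log (π₁.rnDeriv ρ₁ x).toReal) π₁) :
    KLdiv (ENNReal.ofReal l • π₀ + ENNReal.ofReal (1-l) • π₁)
          (ENNReal.ofReal l • ρ₀ + ENNReal.ofReal (1-l) • ρ₁)
      ≤ ((l * ∫ x, Real.log (π₀.rnDeriv ρ₀ x).toReal ∂π₀
          + (1-l) * ∫ x, Real.log (π₁.rnDeriv ρ₁ x).toReal ∂π₁ : ℝ) : EReal) := by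
  have hl1' : 0 < 1 - l := by linarith
  set c₀ : ℝ≥0∞ := ENNReal.ofReal l with hc₀def
  set c₁ : ℝ≥0∞ := ENNReal.ofReal (1-l) with hc₁def
  have hc₀top : c₀ ≠ ⊤ := ENNReal.ofReal_ne_top
  have hc₁top : c₁ ≠ ⊤ := ENNReal.ofReal_ne_top
  have hc₀0 : c₀ ≠ 0 := (ENNReal.ofReal_pos.mpr hl0).ne'
  have hc₁0 : c₁ ≠ 0 := (ENNReal.ofReal_pos.mpr hl1').ne'
  set π : Measure X := c₀ • π₀ + c₁ • π₁ with hπdef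
  set ρ : Measure X := c₀ • ρ₀ + c₁ • ρ₁ with hρdef
  haveI : IsFiniteMeasure (c₀ • π₀) := ⟨by
    simp only [Measure.smul_apply, smul_eq_mul]
    exact ENNReal.mul_lt_top hc₀top.lt_top (measure_lt_top _ _)⟩
  haveI : IsFiniteMeasure (c₁ • π₁) := ⟨by
    simp only [Measure.smul_apply, smul_eq_mul]
    exact ENNReal.mul_lt_top hc₁top.lt_top (measure_lt_top _ _)⟩
  haveI : IsFiniteMeasure (c₀ • ρ₀) := ⟨by
    simp only [Measure.smul_apply, smul_eq_mul]
    exact ENNReal.mul_lt_top hc₀top.lt_top (measure_lt_top _ _)⟩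
  haveI : IsFiniteMeasure (c₁ • ρ₁) := ⟨by
    simp only [Measure.smul_apply, smul_eq_mul]
    exact ENNReal.mul_lt_top hc₁top.lt_top (measure_lt_top _ _)⟩
  haveI : IsFiniteMeasure π := by rw [hπdef]; infer_instance
  haveI : IsFiniteMeasure ρ := by rw [hρdef]; infer_instance
  -- absolute continuity
  have key_ac : ∀ (μ₀ μ₁ : Measure X), μ₀ ≪ (c₀ • μ₀ + c₁ • μ₁ : Measure X) := by
    intro μ₀ μ₁
    refine Measure.AbsolutelyContinuous.mk fun s hs h => ?_
    simp only [Measure.coe_add, Pi.add_apply, Measure.smul_apply, smul_eq_mul,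
      add_eq_zero, mul_eq_zero] at h
    exact h.1.resolve_left hc₀0
  have key_ac' : ∀ (μ₀ μ₁ : Measure X), μ₁ ≪ (c₀ • μ₀ + c₁ • μ₁ : Measure X) := by
    intro μ₀ μ₁
    refine Measure.AbsolutelyContinuous.mk fun s hs h => ?_
    simp only [Measure.coe_add, Pi.add_apply, Measure.smul_apply, smul_eq_mul,
      add_eq_zero, mul_eq_zero] at h
    exact h.2.resolve_left hc₁0
  have hρ₀ρ : ρ₀ ≪ ρ := key_ac ρ₀ ρ₁
  have hρ₁ρ : ρ₁ ≪ ρ := key_ac' ρ₀ ρ₁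
  have hπρ : π ≪ ρ := by
    refine Measure.AbsolutelyContinuous.mk fun s hs h => ?_
    have h0 : π₀ s = 0 := (h₀.trans hρ₀ρ) h
    have h1 : π₁ s = 0 := (h₁.trans hρ₁ρ) h
    simp [hπdef, Measure.coe_add, Pi.add_apply, Measure.smul_apply, h0, h1]
  -- a.e. identities over ρ
  have E1 : π.rnDeriv ρ =ᵐ[ρ] fun x => c₀ * π₀.rnDeriv ρ x + c₁ * π₁.rnDeriv ρ x := by
    have h1 := Measure.rnDeriv_add' (c₀ • π₀) (c₁ • π₁) ρ
    have h2 := Measure.rnDeriv_smul_left_of_ne_top π₀ ρ hc₀top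
    have h3 := Measure.rnDeriv_smul_left_of_ne_top π₁ ρ hc₁top
    filter_upwards [h1, h2, h3] with x hx1 hx2 hx3
    simp only [Pi.add_apply] at hx1
    rw [hπdef, hx1, hx2, hx3]
    simp [smul_eq_mul]
  have E3 : (fun x => c₀ * ρ₀.rnDeriv ρ x + c₁ * ρ₁.rnDeriv ρ x) =ᵐ[ρ] fun _ => 1 := by
    have h1 := Measure.rnDeriv_add' (c₀ • ρ₀) (c₁ • ρ₁) ρ
    have h2 := Measure.rnDeriv_smul_left_of_ne_top ρ₀ ρ hc₀top
    have h3 := Measure.rnDeriv_smul_left_of_ne_top ρ₁ ρ hc₁top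
    have h4 := Measure.rnDeriv_self ρ
    filter_upwards [h1, h2, h3, h4] with x hx1 hx2 hx3 hx4
    simp only [Pi.add_apply] at hx1
    have : ρ.rnDeriv ρ x = (c₀ • ρ₀).rnDeriv ρ x + (c₁ • ρ₁).rnDeriv ρ x := by
      rw [hρdef] at hx1 ⊢; exact hx1
    rw [hx2, hx3] at this
    simp only [Pi.smul_apply, smul_eq_mul] at this
    rw [← this, hx4]
  have E20 : π₀.rnDeriv ρ =ᵐ[ρ] π₀.rnDeriv ρ₀ * ρ₀.rnDeriv ρ :=
    (Measure.rnDeriv_mul_rnDeriv (κ := ρ) h₀).symm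
  have E21 : π₁.rnDeriv ρ =ᵐ[ρ] π₁.rnDeriv ρ₁ * ρ₁.rnDeriv ρ :=
    (Measure.rnDeriv_mul_rnDeriv (κ := ρ) h₁).symm
  -- pointwise real identities
  have hFae : ∀ᵐ x ∂ρ,
      ((π.rnDeriv ρ x).toReal
        = l * ((π₀.rnDeriv ρ₀ x).toReal * (ρ₀.rnDeriv ρ x).toReal)
          + (1-l) * ((π₁.rnDeriv ρ₁ x).toReal * (ρ₁.rnDeriv ρ x).toReal))
      ∧ (l * (ρ₀.rnDeriv ρ x).toReal + (1-l) * (ρ₁.rnDeriv ρ x).toReal = 1) := by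
    filter_upwards [E1, E20, E21, E3, Measure.rnDeriv_lt_top π₀ ρ, Measure.rnDeriv_lt_top π₁ ρ,
      Measure.rnDeriv_lt_top ρ₀ ρ, Measure.rnDeriv_lt_top ρ₁ ρ]
      with x h1 h20 h21 h3 hf0 hf1 hg0 hg1
    have ht0 : c₀ * π₀.rnDeriv ρ x ≠ ⊤ := ENNReal.mul_ne_top hc₀top hf0.ne
    have ht1 : c₁ * π₁.rnDeriv ρ x ≠ ⊤ := ENNReal.mul_ne_top hc₁top hf1.ne
    have hs0 : c₀ * ρ₀.rnDeriv ρ x ≠ ⊤ := ENNReal.mul_ne_top hc₀top hg0.ne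
    have hs1 : c₁ * ρ₁.rnDeriv ρ x ≠ ⊤ := ENNReal.mul_ne_top hc₁top hg1.ne
    constructor
    · rw [h1, ENNReal.toReal_add ht0 ht1, ENNReal.toReal_mul, ENNReal.toReal_mul,
        h20, h21]
      simp only [Pi.mul_apply, ENNReal.toReal_mul, hc₀def, hc₁def,
        ENNReal.toReal_ofReal hl0.le, ENNReal.toReal_ofReal hl1'.le]
    · have := congrArg ENNReal.toReal h3
      simp only [ENNReal.toReal_one] at this
      rw [ENNReal.toReal_add hs0 hs1, ENNReal.toReal_mul, ENNReal.toReal_mul,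
        hc₀def, hc₁def, ENNReal.toReal_ofReal hl0.le, ENNReal.toReal_ofReal hl1'.le] at this
      exact this
  -- integrability of the pieces
  have hpsi0 : Integrable
      (fun x => (π₀.rnDeriv ρ₀ x).toReal * Real.log (π₀.rnDeriv ρ₀ x).toReal) ρ₀ := by
    simpa [smul_eq_mul] using (integrable_rnDeriv_smul_iff h₀).mpr i₀
  have hpsi1 : Integrable
      (fun x => (π₁.rnDeriv ρ₁ x).toReal * Real.log (π₁.rnDeriv ρ₁ x).toReal) ρ₁ := by
    simpa [smul_eq_mul] using (integrable_rnDeriv_smul_iff h₁).mpr i₁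
  have hR0 : Integrable (fun x => (ρ₀.rnDeriv ρ x).toReal *
      ((π₀.rnDeriv ρ₀ x).toReal * Real.log (π₀.rnDeriv ρ₀ x).toReal)) ρ := by
    simpa [smul_eq_mul] using (integrable_rnDeriv_smul_iff hρ₀ρ).mpr hpsi0
  have hR1 : Integrable (fun x => (ρ₁.rnDeriv ρ x).toReal *
      ((π₁.rnDeriv ρ₁ x).toReal * Real.log (π₁.rnDeriv ρ₁ x).toReal)) ρ := by
    simpa [smul_eq_mul] using (integrable_rnDeriv_smul_iff hρ₁ρ).mpr hpsi1
  have hRHSint : Integrable (fun x => l * ((ρ₀.rnDeriv ρ x).toReal *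
      ((π₀.rnDeriv ρ₀ x).toReal * Real.log (π₀.rnDeriv ρ₀ x).toReal))
      + (1-l) * ((ρ₁.rnDeriv ρ x).toReal *
      ((π₁.rnDeriv ρ₁ x).toReal * Real.log (π₁.rnDeriv ρ₁ x).toReal))) ρ :=
    (hR0.const_mul l).add (hR1.const_mul (1-l))
  -- pointwise Jensen
  have hkey : ∀ᵐ x ∂ρ, (π.rnDeriv ρ x).toReal * Real.log (π.rnDeriv ρ x).toReal
      ≤ l * ((ρ₀.rnDeriv ρ x).toReal *
          ((π₀.rnDeriv ρ₀ x).toReal * Real.log (π₀.rnDeriv ρ₀ x).toReal))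
        + (1-l) * ((ρ₁.rnDeriv ρ x).toReal *
          ((π₁.rnDeriv ρ₁ x).toReal * Real.log (π₁.rnDeriv ρ₁ x).toReal)) := by
    filter_upwards [hFae] with x hx
    obtain ⟨hx1, hx2⟩ := hx
    have hH0 : (0:ℝ) ≤ (π₀.rnDeriv ρ₀ x).toReal := ENNReal.toReal_nonneg
    have hH1 : (0:ℝ) ≤ (π₁.rnDeriv ρ₁ x).toReal := ENNReal.toReal_nonneg
    have hw0 : (0:ℝ) ≤ l * (ρ₀.rnDeriv ρ x).toReal :=
      mul_nonneg hl0.le ENNReal.toReal_nonneg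
    have hw1 : (0:ℝ) ≤ (1-l) * (ρ₁.rnDeriv ρ x).toReal :=
      mul_nonneg hl1'.le ENNReal.toReal_nonneg
    have jensen := Real.convexOn_mul_log.2 (Set.mem_Ici.mpr hH0) (Set.mem_Ici.mpr hH1)
      hw0 hw1 hx2
    simp only [smul_eq_mul] at jensen
    have hx1' : (π.rnDeriv ρ x).toReal
        = l * (ρ₀.rnDeriv ρ x).toReal * (π₀.rnDeriv ρ₀ x).toReal
          + (1-l) * (ρ₁.rnDeriv ρ x).toReal * (π₁.rnDeriv ρ₁ x).toReal := by
      rw [hx1]; ring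
    rw [hx1']
    refine le_trans jensen (le_of_eq (by ring))
  -- integrability of F log F
  have hFlogm : AEStronglyMeasurable
      (fun x => (π.rnDeriv ρ x).toReal * Real.log (π.rnDeriv ρ x).toReal) ρ :=
    ((Measure.measurable_rnDeriv π ρ).ennreal_toReal.mul
      (Measure.measurable_rnDeriv π ρ).ennreal_toReal.log).aestronglyMeasurable
  have hLHSint : Integrable
      (fun x => (π.rnDeriv ρ x).toReal * Real.log (π.rnDeriv ρ x).toReal) ρ := by
    refine Integrable.mono' ((integrable_const (1:ℝ)).add hRHSint.abs) hFlogm ?_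
    filter_upwards [hkey] with x hx
    simp only [Pi.add_apply]
    rw [Real.norm_eq_abs, abs_le]
    have hlow := mul_log_ge_neg_one (π.rnDeriv ρ x).toReal ENNReal.toReal_nonneg
    constructor
    · have := abs_nonneg (l * ((ρ₀.rnDeriv ρ x).toReal *
          ((π₀.rnDeriv ρ₀ x).toReal * Real.log (π₀.rnDeriv ρ₀ x).toReal))
        + (1-l) * ((ρ₁.rnDeriv ρ x).toReal *
          ((π₁.rnDeriv ρ₁ x).toReal * Real.log (π₁.rnDeriv ρ₁ x).toReal)))
      linarith
    · have := le_abs_self (l * ((ρ₀.rnDeriv ρ x).toReal *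
          ((π₀.rnDeriv ρ₀ x).toReal * Real.log (π₀.rnDeriv ρ₀ x).toReal))
        + (1-l) * ((ρ₁.rnDeriv ρ x).toReal *
          ((π₁.rnDeriv ρ₁ x).toReal * Real.log (π₁.rnDeriv ρ₁ x).toReal)))
      linarith
  -- integral comparisons
  have hmono := integral_mono_ae hLHSint hRHSint hkey
  have hIL : ∫ x, (π.rnDeriv ρ x).toReal * Real.log (π.rnDeriv ρ x).toReal ∂ρ
      = ∫ x, Real.log (π.rnDeriv ρ x).toReal ∂π := by
    have := integral_rnDeriv_smul (μ := π) (ν := ρ) hπρ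
      (f := fun x => Real.log (π.rnDeriv ρ x).toReal)
    simpa [smul_eq_mul] using this
  have hI0 : ∫ x, (ρ₀.rnDeriv ρ x).toReal *
      ((π₀.rnDeriv ρ₀ x).toReal * Real.log (π₀.rnDeriv ρ₀ x).toReal) ∂ρ
      = ∫ x, Real.log (π₀.rnDeriv ρ₀ x).toReal ∂π₀ := by
    have e1 := integral_rnDeriv_smul (μ := ρ₀) (ν := ρ) hρ₀ρ
      (f := fun x => (π₀.rnDeriv ρ₀ x).toReal * Real.log (π₀.rnDeriv ρ₀ x).toReal)
    have e2 := integral_rnDeriv_smul (μ := π₀) (ν := ρ₀) h₀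
      (f := fun x => Real.log (π₀.rnDeriv ρ₀ x).toReal)
    simp only [smul_eq_mul] at e1 e2
    rw [e1, e2]
  have hI1 : ∫ x, (ρ₁.rnDeriv ρ x).toReal *
      ((π₁.rnDeriv ρ₁ x).toReal * Real.log (π₁.rnDeriv ρ₁ x).toReal) ∂ρ
      = ∫ x, Real.log (π₁.rnDeriv ρ₁ x).toReal ∂π₁ := by
    have e1 := integral_rnDeriv_smul (μ := ρ₁) (ν := ρ) hρ₁ρ
      (f := fun x => (π₁.rnDeriv ρ₁ x).toReal * Real.log (π₁.rnDeriv ρ₁ x).toReal)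
    have e2 := integral_rnDeriv_smul (μ := π₁) (ν := ρ₁) h₁
      (f := fun x => Real.log (π₁.rnDeriv ρ₁ x).toReal)
    simp only [smul_eq_mul] at e1 e2
    rw [e1, e2]
  have hIR : ∫ x, (l * ((ρ₀.rnDeriv ρ x).toReal *
      ((π₀.rnDeriv ρ₀ x).toReal * Real.log (π₀.rnDeriv ρ₀ x).toReal))
      + (1-l) * ((ρ₁.rnDeriv ρ x).toReal *
      ((π₁.rnDeriv ρ₁ x).toReal * Real.log (π₁.rnDeriv ρ₁ x).toReal))) ∂ρ
      = l * ∫ x, Real.log (π₀.rnDeriv ρ₀ x).toReal ∂π₀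
        + (1-l) * ∫ x, Real.log (π₁.rnDeriv ρ₁ x).toReal ∂π₁ := by
    rw [integral_add (hR0.const_mul l) (hR1.const_mul (1-l)),
      integral_const_mul, integral_const_mul, hI0, hI1]
  -- conclude
  have hint_pi : Integrable (fun x => Real.log (π.rnDeriv ρ x).toReal) π := by
    apply (integrable_rnDeriv_smul_iff hπρ).mp
    simpa [smul_eq_mul] using hLHSint
  have hKL : KLdiv π ρ = ((∫ x, Real.log (π.rnDeriv ρ x).toReal ∂π : ℝ) : EReal) :=
    if_pos ⟨hπρ, hint_pi⟩
  rw [hKL]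
  rw [hIL, hIR] at hmono
  exact_mod_cast hmono


lemma pos_mul_ne_bot {c : ℝ} (hc : 0 < c) {x : EReal} (hx : x ≠ ⊥) : (c : EReal) * x ≠ ⊥ := by
  induction x using EReal.rec with
  | bot => exact absurd rfl hx
  | coe y => rw [← EReal.coe_mul]; exact EReal.coe_ne_bot _
  | top => rw [EReal.coe_mul_top_of_pos hc]; exact bot_lt_top.ne'

lemma pos_mul_ne_top_of_real {c : ℝ} (y : ℝ) : (c : EReal) * (y : EReal) ≠ ⊤ := by
  rw [← EReal.coe_mul]; exact EReal.coe_ne_top _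

lemma value_ne_bot {X : Type*} [MeasurableSpace X] (π ρ : Measure X) {ε : ℝ} (hε : 0 < ε)
    (I : ℝ≥0∞) : (I : EReal) + (ε : EReal) * KLdiv π ρ ≠ ⊥ := by
  have h1 : (I : EReal) ≠ ⊥ := EReal.coe_ennreal_ne_bot I
  have h2 : (ε : EReal) * KLdiv π ρ ≠ ⊥ := pos_mul_ne_bot hε (KLdiv_ne_bot π ρ)
  intro h
  rcases EReal.add_eq_bot_iff.mp h with h | h
  · exact h1 h
  · exact h2 h

lemma coe_ennreal_eq_coe_toReal {x : ℝ≥0∞} (h : x ≠ ⊤) :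
    (x : EReal) = ((x.toReal : ℝ) : EReal) := by
  rw [← ENNReal.ofReal_toReal h, EReal.coe_ennreal_ofReal]
  simp [ENNReal.toReal_nonneg]

lemma key_ineq {X : Type*} [MeasurableSpace X] (f : X → ℝ≥0∞) (π₀ π₁ ρ₀ ρ₁ : Measure X)
    [IsProbabilityMeasure π₀] [IsProbabilityMeasure π₁]
    [IsProbabilityMeasure ρ₀] [IsProbabilityMeasure ρ₁]
    {ε l : ℝ} (hε : 0 < ε) (hl0 : 0 < l) (hl1 : l < 1) :
    ((∫⁻ x, f x ∂(ENNReal.ofReal l • π₀ + ENNReal.ofReal (1-l) • π₁) : ℝ≥0∞) : EReal)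
      + (ε : EReal) * KLdiv (ENNReal.ofReal l • π₀ + ENNReal.ofReal (1-l) • π₁)
          (ENNReal.ofReal l • ρ₀ + ENNReal.ofReal (1-l) • ρ₁)
    ≤ (l : EReal) * (((∫⁻ x, f x ∂π₀ : ℝ≥0∞) : EReal) + (ε : EReal) * KLdiv π₀ ρ₀)
      + ((1-l : ℝ) : EReal) * (((∫⁻ x, f x ∂π₁ : ℝ≥0∞) : EReal) + (ε : EReal) * KLdiv π₁ ρ₁) := by
  have hl1' : 0 < 1 - l := by linarith
  set I₀ : ℝ≥0∞ := ∫⁻ x, f x ∂π₀ with hI₀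
  set I₁ : ℝ≥0∞ := ∫⁻ x, f x ∂π₁ with hI₁
  have hC₁ne : (((I₁ : ℝ≥0∞)) : EReal) + (ε : EReal) * KLdiv π₁ ρ₁ ≠ ⊥ := value_ne_bot _ _ hε _
  have hC₀ne : (((I₀ : ℝ≥0∞)) : EReal) + (ε : EReal) * KLdiv π₀ ρ₀ ≠ ⊥ := value_ne_bot _ _ hε _
  by_cases hK0 : KLdiv π₀ ρ₀ = ⊤
  · have h1 : (ε : EReal) * KLdiv π₀ ρ₀ = ⊤ := by rw [hK0]; exact EReal.coe_mul_top_of_pos hε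
    have h2 : ((I₀ : ℝ≥0∞) : EReal) + (ε : EReal) * KLdiv π₀ ρ₀ = ⊤ := by
      rw [h1]; exact EReal.add_top_of_ne_bot (EReal.coe_ennreal_ne_bot _)
    rw [h2, EReal.coe_mul_top_of_pos hl0,
      EReal.top_add_of_ne_bot (pos_mul_ne_bot hl1' hC₁ne)]
    exact le_top
  by_cases hK1 : KLdiv π₁ ρ₁ = ⊤
  · have h1 : (ε : EReal) * KLdiv π₁ ρ₁ = ⊤ := by rw [hK1]; exact EReal.coe_mul_top_of_pos hε
    have h2 : ((I₁ : ℝ≥0∞) : EReal) + (ε : EReal) * KLdiv π₁ ρ₁ = ⊤ := by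
      rw [h1]; exact EReal.add_top_of_ne_bot (EReal.coe_ennreal_ne_bot _)
    rw [h2, EReal.coe_mul_top_of_pos hl1',
      EReal.add_top_of_ne_bot (pos_mul_ne_bot hl0 hC₀ne)]
    exact le_top
  -- both KL divergences finite
  have hcond₀ : π₀ ≪ ρ₀ ∧ Integrable (fun x => Real.log (π₀.rnDeriv ρ₀ x).toReal) π₀ := by
    by_contra h; exact hK0 (if_neg h)
  have hcond₁ : π₁ ≪ ρ₁ ∧ Integrable (fun x => Real.log (π₁.rnDeriv ρ₁ x).toReal) π₁ := by
    by_contra h; exact hK1 (if_neg h)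
  set k₀ : ℝ := ∫ x, Real.log (π₀.rnDeriv ρ₀ x).toReal ∂π₀ with hk₀
  set k₁ : ℝ := ∫ x, Real.log (π₁.rnDeriv ρ₁ x).toReal ∂π₁ with hk₁
  have hKL0 : KLdiv π₀ ρ₀ = ((k₀ : ℝ) : EReal) := if_pos hcond₀
  have hKL1 : KLdiv π₁ ρ₁ = ((k₁ : ℝ) : EReal) := if_pos hcond₁
  have hKLmix := KLdiv_convex π₀ π₁ ρ₀ ρ₁ hl0 hl1 hcond₀.1 hcond₁.1 hcond₀.2 hcond₁.2
  have hcost : (∫⁻ x, f x ∂(ENNReal.ofReal l • π₀ + ENNReal.ofReal (1-l) • π₁) : ℝ≥0∞)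
      = ENNReal.ofReal l * I₀ + ENNReal.ofReal (1-l) * I₁ := by
    rw [lintegral_add_measure, lintegral_smul_measure, lintegral_smul_measure, smul_eq_mul, smul_eq_mul]
  by_cases hI0top : I₀ = ⊤
  · have h2 : ((I₀ : ℝ≥0∞) : EReal) + (ε : EReal) * KLdiv π₀ ρ₀ = ⊤ := by
      rw [hI0top, hKL0]
      simp only [EReal.coe_ennreal_top]
      exact EReal.top_add_of_ne_bot (by rw [← EReal.coe_mul]; exact EReal.coe_ne_bot _)
    rw [h2, EReal.coe_mul_top_of_pos hl0,
      EReal.top_add_of_ne_bot (pos_mul_ne_bot hl1' hC₁ne)]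
    exact le_top
  by_cases hI1top : I₁ = ⊤
  · have h2 : ((I₁ : ℝ≥0∞) : EReal) + (ε : EReal) * KLdiv π₁ ρ₁ = ⊤ := by
      rw [hI1top, hKL1]
      simp only [EReal.coe_ennreal_top]
      exact EReal.top_add_of_ne_bot (by rw [← EReal.coe_mul]; exact EReal.coe_ne_bot _)
    rw [h2, EReal.coe_mul_top_of_pos hl1',
      EReal.add_top_of_ne_bot (pos_mul_ne_bot hl0 hC₀ne)]
    exact le_top
  -- everything finite
  have hcosttop : ENNReal.ofReal l * I₀ + ENNReal.ofReal (1-l) * I₁ ≠ ⊤ :=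
    ENNReal.add_ne_top.mpr ⟨ENNReal.mul_ne_top ENNReal.ofReal_ne_top hI0top,
      ENNReal.mul_ne_top ENNReal.ofReal_ne_top hI1top⟩
  have hcoe : ((ENNReal.ofReal l * I₀ + ENNReal.ofReal (1-l) * I₁ : ℝ≥0∞) : EReal)
      = ((l * I₀.toReal + (1-l) * I₁.toReal : ℝ) : EReal) := by
    rw [coe_ennreal_eq_coe_toReal hcosttop]
    congr 1
    rw [ENNReal.toReal_add (ENNReal.mul_ne_top ENNReal.ofReal_ne_top hI0top)
      (ENNReal.mul_ne_top ENNReal.ofReal_ne_top hI1top), ENNReal.toReal_mul,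
      ENNReal.toReal_mul, ENNReal.toReal_ofReal hl0.le, ENNReal.toReal_ofReal hl1'.le]
  calc ((∫⁻ x, f x ∂(ENNReal.ofReal l • π₀ + ENNReal.ofReal (1-l) • π₁) : ℝ≥0∞) : EReal)
      + (ε : EReal) * KLdiv (ENNReal.ofReal l • π₀ + ENNReal.ofReal (1-l) • π₁)
          (ENNReal.ofReal l • ρ₀ + ENNReal.ofReal (1-l) • ρ₁)
      ≤ ((l * I₀.toReal + (1-l) * I₁.toReal : ℝ) : EReal)
        + (ε : EReal) * ((l * k₀ + (1-l) * k₁ : ℝ) : EReal) := by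
        refine add_le_add (le_of_eq ?_) ?_
        · rw [hcost, hcoe]
        · exact mul_le_mul_of_nonneg_left hKLmix (by exact_mod_cast hε.le)
    _ = ((l * (I₀.toReal + ε * k₀) + (1-l) * (I₁.toReal + ε * k₁) : ℝ) : EReal) := by
        rw [← EReal.coe_mul, ← EReal.coe_add]
        congr 1
        ring
    _ = (l : EReal) * (((I₀ : ℝ≥0∞) : EReal) + (ε : EReal) * KLdiv π₀ ρ₀)
        + ((1-l : ℝ) : EReal) * (((I₁ : ℝ≥0∞) : EReal) + (ε : EReal) * KLdiv π₁ ρ₁) := by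
        rw [hKL0, hKL1, coe_ennreal_eq_coe_toReal hI0top, coe_ennreal_eq_coe_toReal hI1top,
          ← EReal.coe_mul, ← EReal.coe_mul, ← EReal.coe_add, ← EReal.coe_add,
          ← EReal.coe_mul, ← EReal.coe_mul, ← EReal.coe_add]


lemma fst_smul_meas {X Y : Type*} [MeasurableSpace X] [MeasurableSpace Y]
    (μ : Measure (X × Y)) (c : ℝ≥0∞) : (c • μ).fst = c • μ.fst :=
  Measure.map_smul c μ Prod.fst

lemma snd_smul_meas {X Y : Type*} [MeasurableSpace X] [MeasurableSpace Y]
    (μ : Measure (X × Y)) (c : ℝ≥0∞) : (c • μ).snd = c • μ.snd :=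
  Measure.map_smul c μ Prod.snd

lemma OTe_nonneg (d : ℕ) {ε : ℝ} (hε : 0 ≤ ε) (α β : Measure (EuclideanSpace ℝ (Fin d)))
    [IsProbabilityMeasure α] [IsProbabilityMeasure β] : 0 ≤ OTe d ε α β := by
  refine le_iInf fun π => le_iInf fun hπ => le_iInf fun hfst => le_iInf fun hsnd => ?_
  haveI := hπ
  exact value_nonneg π (α.prod β) hε _

/-- for `ε > 0` and a sub-Gaussian probability measure `β` on `ℝ^d`,
the map `α ↦ OT_ε(α, β)` is convex on sub-Gaussian probability measures. -/
theorem ot_product_convex_first_argument (d : ℕ) (ε : ℝ) (hε : 0 < ε)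
    (β : Measure (EuclideanSpace ℝ (Fin d)))
    (hβ : IsProbabilityMeasure β) (hβG : SubGaussian d β) :
    ∀ α₀ α₁ : Measure (EuclideanSpace ℝ (Fin d)),
      IsProbabilityMeasure α₀ → SubGaussian d α₀ →
      IsProbabilityMeasure α₁ → SubGaussian d α₁ →
      ∀ l : ℝ, l ∈ Set.Icc (0 : ℝ) 1 →
        OTe d ε (ENNReal.ofReal l • α₀ + ENNReal.ofReal (1 - l) • α₁) β
          ≤ ((l : ℝ) : EReal) * OTe d ε α₀ β
            + ((1 - l : ℝ) : EReal) * OTe d ε α₁ β := by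
  intro α₀ α₁ hα₀ hαG₀ hα₁ hαG₁ l hl
  obtain ⟨hl0, hl1⟩ := hl
  haveI := hβ; haveI := hα₀; haveI := hα₁
  rcases eq_or_lt_of_le hl0 with h0 | h0
  · -- l = 0
    rw [← h0]
    simp only [ENNReal.ofReal_zero, zero_smul, zero_add, sub_zero, ENNReal.ofReal_one, one_smul,
      EReal.coe_zero, EReal.zero_mul, EReal.coe_one, EReal.one_mul]
    exact le_refl _
  rcases eq_or_lt_of_le hl1 with h1 | h1
  · -- l = 1
    rw [h1]
    simp only [ENNReal.ofReal_one, one_smul, sub_self, ENNReal.ofReal_zero, zero_smul, add_zero,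
      EReal.coe_zero, EReal.zero_mul, EReal.coe_one, EReal.one_mul]
    exact le_refl _
  -- 0 < l < 1
  have hl1' : 0 < 1 - l := by linarith
  set A := OTe d ε α₀ β with hA
  set B := OTe d ε α₁ β with hB
  have hA0 : (0 : EReal) ≤ A := OTe_nonneg d hε.le α₀ β
  have hB0 : (0 : EReal) ≤ B := OTe_nonneg d hε.le α₁ β
  have hAbot : A ≠ ⊥ := fun h => by simp [h] at hA0
  have hBbot : B ≠ ⊥ := fun h => by simp [h] at hB0
  by_cases hAtop : A = ⊤
  · rw [hAtop, EReal.coe_mul_top_of_pos h0,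
      EReal.top_add_of_ne_bot (pos_mul_ne_bot hl1' hBbot)]
    exact le_top
  by_cases hBtop : B = ⊤
  · rw [hBtop, EReal.coe_mul_top_of_pos hl1',
      EReal.add_top_of_ne_bot (pos_mul_ne_bot h0 hAbot)]
    exact le_top
  -- A and B are real
  by_contra hcon
  push_neg at hcon
  obtain ⟨t, ht1, ht2⟩ := EReal.exists_between_coe_real hcon
  set a : ℝ := A.toReal with ha
  set b : ℝ := B.toReal with hb
  have hAa : A = ((a : ℝ) : EReal) := (EReal.coe_toReal hAtop hAbot).symm
  have hBb : B = ((b : ℝ) : EReal) := (EReal.coe_toReal hBtop hBbot).symm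
  have hrt : l * a + (1 - l) * b < t := by
    have : ((l * a + (1 - l) * b : ℝ) : EReal) < (t : EReal) := by
      rw [EReal.coe_add, EReal.coe_mul, EReal.coe_mul, ← hAa, ← hBb]
      exact ht1
    exact_mod_cast this
  set δ : ℝ := t - (l * a + (1 - l) * b) with hδ
  have hδpos : 0 < δ := by rw [hδ]; linarith
  -- extract near-optimal couplings
  have hAlt : A < ((a + δ : ℝ) : EReal) := by
    rw [hAa]
    exact_mod_cast (by nlinarith : a < a + δ)
  have hBlt : B < ((b + δ : ℝ) : EReal) := by
    rw [hBb]
    exact_mod_cast (by nlinarith : b < b + δ)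
  rw [hA, OTe] at hAlt
  rw [hB, OTe] at hBlt
  obtain ⟨π₀, h₀'⟩ := iInf_lt_iff.mp hAlt
  obtain ⟨hπ₀prob, h₀''⟩ := iInf_lt_iff.mp h₀'
  obtain ⟨hπ₀fst, h₀'''⟩ := iInf_lt_iff.mp h₀''
  obtain ⟨hπ₀snd, hC₀⟩ := iInf_lt_iff.mp h₀'''
  obtain ⟨π₁, h₁'⟩ := iInf_lt_iff.mp hBlt
  obtain ⟨hπ₁prob, h₁''⟩ := iInf_lt_iff.mp h₁'
  obtain ⟨hπ₁fst, h₁'''⟩ := iInf_lt_iff.mp h₁''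
  obtain ⟨hπ₁snd, hC₁⟩ := iInf_lt_iff.mp h₁'''
  haveI := hπ₀prob; haveI := hπ₁prob
  set c₀ : ℝ≥0∞ := ENNReal.ofReal l with hc₀
  set c₁ : ℝ≥0∞ := ENNReal.ofReal (1 - l) with hc₁
  have hc_sum : c₀ + c₁ = 1 := by
    rw [hc₀, hc₁, ← ENNReal.ofReal_add hl0 hl1'.le]
    simp
  set π : Measure (EuclideanSpace ℝ (Fin d) × EuclideanSpace ℝ (Fin d)) := c₀ • π₀ + c₁ • π₁
    with hπ
  haveI hπprob : IsProbabilityMeasure π := by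
    constructor
    rw [hπ]
    simp only [Measure.coe_add, Pi.add_apply, Measure.smul_apply, smul_eq_mul, measure_univ,
      mul_one]
    exact hc_sum
  have hπfst : π.fst = c₀ • α₀ + c₁ • α₁ := by
    rw [hπ, Measure.fst_add, fst_smul_meas, fst_smul_meas, hπ₀fst, hπ₁fst]
  have hπsnd : π.snd = β := by
    rw [hπ, Measure.snd_add, snd_smul_meas, snd_smul_meas, hπ₀snd, hπ₁snd, ← add_smul, hc_sum,
      one_smul]
  have hprod : (c₀ • α₀ + c₁ • α₁).prod β = c₀ • (α₀.prod β) + c₁ • (α₁.prod β) := by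
    haveI : IsFiniteMeasure (c₀ • α₀) := ⟨by
      simp only [Measure.smul_apply, smul_eq_mul]
      exact ENNReal.mul_lt_top ENNReal.ofReal_lt_top (measure_lt_top _ _)⟩
    haveI : IsFiniteMeasure (c₁ • α₁) := ⟨by
      simp only [Measure.smul_apply, smul_eq_mul]
      exact ENNReal.mul_lt_top ENNReal.ofReal_lt_top (measure_lt_top _ _)⟩
    rw [Measure.add_prod, smul_prod_meas α₀ β c₀ ENNReal.ofReal_ne_top,
      smul_prod_meas α₁ β c₁ ENNReal.ofReal_ne_top]
  -- the chain of inequalities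
  have hLHS : OTe d ε (c₀ • α₀ + c₁ • α₁) β
      ≤ ((∫⁻ p, ENNReal.ofReal (‖p.1 - p.2‖ ^ 2) ∂π : ℝ≥0∞) : EReal)
        + (ε : EReal) * KLdiv π ((c₀ • α₀ + c₁ • α₁).prod β) := by
    rw [OTe]
    refine iInf_le_of_le π ?_
    refine iInf_le_of_le hπprob ?_
    refine iInf_le_of_le hπfst ?_
    exact iInf_le_of_le hπsnd (le_refl _)
  have hmid := key_ineq (fun p => ENNReal.ofReal (‖p.1 - p.2‖ ^ 2)) π₀ π₁
    (α₀.prod β) (α₁.prod β) hε h0 h1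
  rw [hprod] at hLHS
  have hstep : OTe d ε (c₀ • α₀ + c₁ • α₁) β
      ≤ (l : EReal) * (((∫⁻ p, ENNReal.ofReal (‖p.1 - p.2‖ ^ 2) ∂π₀ : ℝ≥0∞) : EReal)
          + (ε : EReal) * KLdiv π₀ (α₀.prod β))
        + ((1 - l : ℝ) : EReal) * (((∫⁻ p, ENNReal.ofReal (‖p.1 - p.2‖ ^ 2) ∂π₁ : ℝ≥0∞) : EReal)
          + (ε : EReal) * KLdiv π₁ (α₁.prod β)) := le_trans hLHS hmid
  have hfinal : OTe d ε (c₀ • α₀ + c₁ • α₁) β ≤ (t : EReal) := by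
    refine le_trans hstep ?_
    have e1 : (l : EReal) * (((∫⁻ p, ENNReal.ofReal (‖p.1 - p.2‖ ^ 2) ∂π₀ : ℝ≥0∞) : EReal)
          + (ε : EReal) * KLdiv π₀ (α₀.prod β)) ≤ (l : EReal) * ((a + δ : ℝ) : EReal) :=
      mul_le_mul_of_nonneg_left hC₀.le (by exact_mod_cast h0.le)
    have e2 : ((1 - l : ℝ) : EReal) * (((∫⁻ p, ENNReal.ofReal (‖p.1 - p.2‖ ^ 2) ∂π₁ : ℝ≥0∞) : EReal)
          + (ε : EReal) * KLdiv π₁ (α₁.prod β)) ≤ ((1 - l : ℝ) : EReal) * ((b + δ : ℝ) : EReal) :=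
      mul_le_mul_of_nonneg_left hC₁.le (by exact_mod_cast hl1'.le)
    refine le_trans (add_le_add e1 e2) ?_
    rw [← EReal.coe_mul, ← EReal.coe_mul, ← EReal.coe_add]
    exact_mod_cast (by nlinarith : l * (a + δ) + (1 - l) * (b + δ) ≤ t)
  exact absurd (lt_of_le_of_lt hfinal ht2) (lt_irrefl _)
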